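/- arXiv:2510.19759 — 2 statements merged into one kernel-verified Lean document; each statement's English description precedes it below -/
import Mathlib

section
/- Fix an index b with 1 ≤ b ≤ N, and assume q_b ≠ t_m for all m = 1,…,N_t. Then the partial derivative of R with respect to the y-coordinate y_b of q_b exists and equals (4πρ/λ) · Im( Σ_{m=1}^{N_t} [C_2(q)(m,b) − C_1(q)(m,b)] · ((y_b − y_{t,m}) / ‖t_m − q_b‖) · exp(i(2π/λ)‖t_m − q_b‖) ), where y_{t,m} denotes the y-coordinate of t_m and C_j(q)(m,b) is the (m,b) entry of C_j(q). -/
open Matrix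
open scoped ComplexOrder

/-- The near-field channel matrix `H(q) ∈ ℂ^{N×Nt}` with entries
`H(q)_{b,m} = ρ · exp(i (2π/λ) ‖t_m − q_b‖)`. -/
noncomputable def nearFieldH (lam ρ : ℝ) {N Nt : ℕ}
    (t : Fin Nt → EuclideanSpace ℝ (Fin 3))
    (q : Fin N → EuclideanSpace ℝ (Fin 3)) :
    Matrix (Fin N) (Fin Nt) ℂ :=
  Matrix.of fun b m =>
    (ρ : ℂ) * Complex.exp (Complex.I * ((2 * Real.pi / lam * ‖t m - q b‖ : ℝ) : ℂ))

/-- `A(q) = H(q) T H(q)ᴴ + σ² I`. -/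
noncomputable def nearFieldA (lam ρ σ : ℝ) {N Nt : ℕ}
    (T : Matrix (Fin Nt) (Fin Nt) ℂ)
    (t : Fin Nt → EuclideanSpace ℝ (Fin 3))
    (q : Fin N → EuclideanSpace ℝ (Fin 3)) :
    Matrix (Fin N) (Fin N) ℂ :=
  nearFieldH lam ρ t q * T * (nearFieldH lam ρ t q)ᴴ + ((σ ^ 2 : ℝ) : ℂ) • 1

/-- `C(q) = T H(q)ᴴ A(q)⁻¹`. -/
noncomputable def nearFieldC (lam ρ σ : ℝ) {N Nt : ℕ}
    (T : Matrix (Fin Nt) (Fin Nt) ℂ)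
    (t : Fin Nt → EuclideanSpace ℝ (Fin 3))
    (q : Fin N → EuclideanSpace ℝ (Fin 3)) :
    Matrix (Fin Nt) (Fin N) ℂ :=
  T * (nearFieldH lam ρ t q)ᴴ * (nearFieldA lam ρ σ T t q)⁻¹

/-- `R(q) = ln det A₁(q) − ln det A₂(q)` (the determinants are real and positive). -/
noncomputable def nearFieldR (lam ρ σ : ℝ) {N Nt : ℕ}
    (T1 T2 : Matrix (Fin Nt) (Fin Nt) ℂ)
    (t : Fin Nt → EuclideanSpace ℝ (Fin 3))
    (q : Fin N → EuclideanSpace ℝ (Fin 3)) : ℝ :=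
  Real.log ((nearFieldA lam ρ σ T1 t q).det.re)
    - Real.log ((nearFieldA lam ρ σ T2 t q).det.re)

theorem aux_hasDerivAt_det {n : ℕ} {A : ℝ → Matrix (Fin n) (Fin n) ℂ}
    {A' : Matrix (Fin n) (Fin n) ℂ} {x : ℝ}
    (h : ∀ i j, HasDerivAt (fun y => A y i j) (A' i j) x) :
    HasDerivAt (fun y => (A y).det)
      (∑ j, ((A x).updateCol j (fun i => A' i j)).det) x := by
  have key : HasDerivAt (fun y => (A y).det)
      (∑ σ : Equiv.Perm (Fin n), (Equiv.Perm.sign σ : ℤ) *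
        ∑ j, (∏ k ∈ Finset.univ.erase j, A x (σ k) k) * A' (σ j) j) x := by
    simp only [Matrix.det_apply']
    refine HasDerivAt.fun_sum fun σ _ => ?_
    exact (HasDerivAt.fun_finsetProd (fun j _ => h (σ j) j)).const_mul _
  convert key using 1
  simp only [Finset.mul_sum]
  rw [Finset.sum_comm]
  refine Finset.sum_congr rfl fun j _ => ?_
  rw [Matrix.det_apply']
  refine Finset.sum_congr rfl fun σ _ => ?_
  have : ∏ k, ((A x).updateCol j fun i => A' i j) (σ k) k
      = A' (σ j) j * ∏ k ∈ Finset.univ.erase j, A x (σ k) k := by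
    rw [← Finset.mul_prod_erase Finset.univ _ (Finset.mem_univ j)]
    congr 1
    · simp [Matrix.updateCol_apply]
    · refine Finset.prod_congr rfl fun k hk => ?_
      rw [Matrix.updateCol_apply, if_neg (Finset.ne_of_mem_erase hk)]
  rw [this]; ring

theorem aux_sum_det_updateCol {n : ℕ} (A M : Matrix (Fin n) (Fin n) ℂ)
    (hA : IsUnit A.det) :
    ∑ j, (A.updateCol j (fun i => M i j)).det
      = A.det * (A⁻¹ * M).trace := by
  have hadj : A.adjugate = A.det • A⁻¹ := by
    have h1 : A.det • A⁻¹ = (A.det • 1 : Matrix (Fin n) (Fin n) ℂ) * A⁻¹ := by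
      rw [Matrix.smul_mul, Matrix.one_mul]
    rw [h1, ← Matrix.adjugate_mul, Matrix.mul_assoc,
      Matrix.mul_nonsing_inv _ hA, Matrix.mul_one]
  calc ∑ j, (A.updateCol j (fun i => M i j)).det
      = ∑ j, (A.adjugate *ᵥ (fun i => M i j)) j := by
        refine Finset.sum_congr rfl fun j _ => ?_
        rw [← Matrix.cramer_apply, Matrix.cramer_eq_adjugate_mulVec]
    _ = (A.adjugate * M).trace := by
        simp [Matrix.trace, Matrix.diag, Matrix.mulVec, Matrix.mul_apply,
          dotProduct]
    _ = A.det * (A⁻¹ * M).trace := by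
        rw [hadj, Matrix.smul_mul, Matrix.trace_smul, smul_eq_mul]

theorem aux_hasDerivAt_dist (v w : EuclideanSpace ℝ (Fin 3)) (hvw : w ≠ v)
    (u : ℝ → EuclideanSpace ℝ (Fin 3)) (hu : ∀ x, u x = Function.update w 1 x) :
    HasDerivAt (fun x : ℝ => ‖v - u x‖)
      ((w 1 - v 1) / ‖v - w‖) (w 1) := by
  have hnorm : ∀ x : ℝ, ‖v - u x‖
      = Real.sqrt ((v 0 - w 0) ^ 2 + (v 1 - x) ^ 2 + (v 2 - w 2) ^ 2) := by
    intro x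
    rw [EuclideanSpace.norm_eq]
    congr 1
    rw [Fin.sum_univ_three]
    have h0 : (v - u x) 0 = v 0 - w 0 := by
      simp [hu, Function.update_apply]
    have h1 : (v - u x) 1 = v 1 - x := by
      simp [hu, Function.update_apply]
    have h2 : (v - u x) 2 = v 2 - w 2 := by
      simp [hu, Function.update_apply]
    rw [h0, h1, h2]
    simp [Real.norm_eq_abs, sq_abs]
  have hval : (v 0 - w 0) ^ 2 + (v 1 - w 1) ^ 2 + (v 2 - w 2) ^ 2 = ‖v - w‖ ^ 2 := by
    rw [EuclideanSpace.norm_eq, Real.sq_sqrt (by positivity)]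
    rw [Fin.sum_univ_three]
    simp [Real.norm_eq_abs, sq_abs]
  have hpos : 0 < ‖v - w‖ := by
    rw [norm_pos_iff, sub_ne_zero]
    exact fun h => hvw h.symm
  have hinner : HasDerivAt
      (fun x : ℝ => (v 0 - w 0) ^ 2 + (v 1 - x) ^ 2 + (v 2 - w 2) ^ 2)
      (2 * (w 1 - v 1)) (w 1) := by
    have : HasDerivAt (fun x : ℝ => (v 1 - x) ^ 2) (2 * (v 1 - w 1) * (-1)) (w 1) :=
      ((hasDerivAt_id (w 1)).const_sub (v 1)).pow 2 |>.congr_deriv (by simp only [id_eq]; ring)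
    simpa [id] using ((this.const_add ((v 0 - w 0) ^ 2)).add_const ((v 2 - w 2) ^ 2)).congr_deriv
      (by simp only [id_eq]; ring)
  have hne : (v 0 - w 0) ^ 2 + (v 1 - w 1) ^ 2 + (v 2 - w 2) ^ 2 ≠ 0 := by
    rw [hval]; positivity
  have hsq := (Real.hasDerivAt_sqrt hne).comp (w 1) hinner
  have : HasDerivAt (fun x : ℝ => ‖v - u x‖)
      (1 / (2 * Real.sqrt ((v 0 - w 0) ^ 2 + (v 1 - w 1) ^ 2 + (v 2 - w 2) ^ 2))
        * (2 * (w 1 - v 1))) (w 1) := by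
    refine HasDerivAt.congr_of_eventuallyEq hsq ?_
    filter_upwards with x
    exact hnorm x
  convert this using 1
  rw [hval, Real.sqrt_sq hpos.le]
  field_simp

theorem aux_posDef {N Nt : ℕ} (lam ρ σ : ℝ) (hσ : 0 < σ ^ 2)
    (T : Matrix (Fin Nt) (Fin Nt) ℂ) (hTpsd : T.PosSemidef)
    (t : Fin Nt → EuclideanSpace ℝ (Fin 3))
    (q : Fin N → EuclideanSpace ℝ (Fin 3)) :
    (nearFieldA lam ρ σ T t q).PosDef := by
  have h1 : (nearFieldH lam ρ t q * T * (nearFieldH lam ρ t q)ᴴ).PosSemidef :=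
    hTpsd.mul_mul_conjTranspose_same _
  have h2 : (((σ ^ 2 : ℝ) : ℂ) • (1 : Matrix (Fin N) (Fin N) ℂ)).PosDef := by
    rw [Matrix.posDef_iff_dotProduct_mulVec]
    constructor
    · rw [Matrix.IsHermitian, Matrix.conjTranspose_smul, Matrix.conjTranspose_one]
      congr 1
      simp [Complex.ext_iff]
    · intro x hx
      have hx' : 0 < dotProduct (star x) x :=
        dotProduct_star_self_pos_iff.mpr hx
      have hc : (0 : ℂ) < ((σ ^ 2 : ℝ) : ℂ) := by
        rw [Complex.lt_def]
        constructor <;> simp [← Complex.ofReal_pow, hσ]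
      have key : dotProduct (star x) ((((σ ^ 2 : ℝ) : ℂ) •
          (1 : Matrix (Fin N) (Fin N) ℂ)) *ᵥ x)
          = ((σ ^ 2 : ℝ) : ℂ) * dotProduct (star x) x := by
        rw [Matrix.smul_mulVec, Matrix.one_mulVec, dotProduct_smul,
          smul_eq_mul]
      rw [key]
      calc (0:ℂ) = ((σ ^ 2 : ℝ) : ℂ) * 0 := by ring
      _ < ((σ ^ 2 : ℝ) : ℂ) * dotProduct (star x) x :=
          mul_lt_mul_of_pos_left hx' hc
  exact Matrix.PosDef.posSemidef_add h1 h2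

theorem aux_logdet_deriv {N Nt : ℕ}
    (lam ρ σ : ℝ) (hσ : 0 < σ ^ 2)
    (t : Fin Nt → EuclideanSpace ℝ (Fin 3))
    (q : Fin N → EuclideanSpace ℝ (Fin 3))
    (T : Matrix (Fin Nt) (Fin Nt) ℂ) (hT : T.IsHermitian) (hTpsd : T.PosSemidef)
    (b : Fin N) (hq : ∀ m : Fin Nt, q b ≠ t m) :
    HasDerivAt
      (fun x : ℝ => Real.log ((nearFieldA lam ρ σ T t
        (Function.update q b (WithLp.toLp 2 (Function.update (q b) 1 x)))).det.re))
      (2 * (∑ m : Fin Nt, nearFieldC lam ρ σ T t q m b *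
        ((ρ : ℂ) * (Complex.exp (Complex.I * ((2 * Real.pi / lam * ‖t m - q b‖ : ℝ) : ℂ)) *
          (Complex.I * ((2 * Real.pi / lam *
            ((q b 1 - t m 1) / ‖t m - q b‖) : ℝ) : ℂ))))).re)
      (q b 1) := by
  classical
  -- abbreviations
  set H₀ : Matrix (Fin N) (Fin Nt) ℂ := nearFieldH lam ρ t q with hH₀
  set A₀ : Matrix (Fin N) (Fin N) ℂ := nearFieldA lam ρ σ T t q with hA₀
  set u : ℝ → EuclideanSpace ℝ (Fin 3) := fun x => WithLp.toLp 2 (Function.update (q b) 1 x) with hu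
  have hupd : u (q b 1) = q b := by simp [hu]
  have hqx0 : Function.update q b (u (q b 1)) = q := by
    rw [hupd]; exact Function.update_eq_self _ _
  have hqx0' : Function.update q b (WithLp.toLp 2 (Function.update (q b) 1 (q b 1))) = q := hqx0
  -- the derivative of each row-b entry of H
  set h' : Fin Nt → ℂ := fun m =>
    (ρ : ℂ) * (Complex.exp (Complex.I * ((2 * Real.pi / lam * ‖t m - q b‖ : ℝ) : ℂ)) *
      (Complex.I * ((2 * Real.pi / lam *
        ((q b 1 - t m 1) / ‖t m - q b‖) : ℝ) : ℂ))) with hh'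
  set H' : Matrix (Fin N) (Fin Nt) ℂ :=
    Matrix.of (fun i m => if i = b then h' m else 0) with hH'
  set A' : Matrix (Fin N) (Fin N) ℂ :=
    H' * T * H₀ᴴ + (H' * T * H₀ᴴ)ᴴ with hA'
  have hApd : A₀.PosDef := aux_posDef lam ρ σ hσ T hTpsd t q
  have hdet_lt : (0 : ℂ) < A₀.det := hApd.det_pos
  have hdet_re : 0 < A₀.det.re := (Complex.lt_def.mp hdet_lt).1
  have hdet_im : A₀.det.im = 0 := ((Complex.lt_def.mp hdet_lt).2).symm
  have hdet_unit : IsUnit A₀.det := by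
    refine isUnit_iff_ne_zero.mpr fun h => ?_
    rw [h] at hdet_re; simp at hdet_re
  -- derivative of entries of H along the motion
  have hh : ∀ m : Fin Nt, HasDerivAt
      (fun x : ℝ => (ρ : ℂ) * Complex.exp (Complex.I *
        ((2 * Real.pi / lam * ‖t m - u x‖ : ℝ) : ℂ)))
      (h' m) (q b 1) := by
    intro m
    have hr := aux_hasDerivAt_dist (t m) (q b) (hq m) u (fun _ => rfl)
    have h1 := (hr.const_mul (2 * Real.pi / lam)).ofReal_comp
    have h2 := (h1.const_mul Complex.I).cexp.const_mul (ρ : ℂ)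
    refine h2.congr_deriv ?_
    rw [hupd, hh']
  have hHent : ∀ i m, HasDerivAt
      (fun x : ℝ => nearFieldH lam ρ t
        (Function.update q b (WithLp.toLp 2 (Function.update (q b) 1 x))) i m)
      (H' i m) (q b 1) := by
    intro i m
    by_cases hib : i = b
    · rw [hib]
      have hfun : (fun x : ℝ => nearFieldH lam ρ t
          (Function.update q b (WithLp.toLp 2 (Function.update (q b) 1 x))) b m)
          = fun x : ℝ => (ρ : ℂ) * Complex.exp (Complex.I *
            ((2 * Real.pi / lam * ‖t m - u x‖ : ℝ) : ℂ)) := by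
        funext x
        simp [nearFieldH, hu, Function.update_self]
      rw [hfun]
      simpa [hH'] using hh m
    · have hfun : (fun x : ℝ => nearFieldH lam ρ t
          (Function.update q b (WithLp.toLp 2 (Function.update (q b) 1 x))) i m)
          = fun _ : ℝ => nearFieldH lam ρ t q i m := by
        funext x
        simp [nearFieldH, hu, Function.update_of_ne hib]
      rw [hfun]
      simpa [hH', hib] using hasDerivAt_const (q b 1) (nearFieldH lam ρ t q i m)
  -- derivative of the entries of A
  have hAent : ∀ i j, HasDerivAt
      (fun x : ℝ => nearFieldA lam ρ σ T t
        (Function.update q b (WithLp.toLp 2 (Function.update (q b) 1 x))) i j)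
      (A' i j) (q b 1) := by
    intro i j
    have hexp : (fun x : ℝ => nearFieldA lam ρ σ T t
        (Function.update q b (WithLp.toLp 2 (Function.update (q b) 1 x))) i j)
        = fun x : ℝ => (∑ n : Fin Nt,
            (∑ m : Fin Nt, nearFieldH lam ρ t
              (Function.update q b (WithLp.toLp 2 (Function.update (q b) 1 x))) i m * T m n) *
            star (nearFieldH lam ρ t
              (Function.update q b (WithLp.toLp 2 (Function.update (q b) 1 x))) j n))
          + (((σ ^ 2 : ℝ) : ℂ) • (1 : Matrix (Fin N) (Fin N) ℂ)) i j := by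
      funext x
      simp [nearFieldA, Matrix.mul_apply, Matrix.conjTranspose_apply]
    rw [hexp]
    have hsum : HasDerivAt (fun x : ℝ => ∑ n : Fin Nt,
        (∑ m : Fin Nt, nearFieldH lam ρ t
          (Function.update q b (WithLp.toLp 2 (Function.update (q b) 1 x))) i m * T m n) *
        star (nearFieldH lam ρ t
          (Function.update q b (WithLp.toLp 2 (Function.update (q b) 1 x))) j n))
        (∑ n : Fin Nt, ((∑ m : Fin Nt, H' i m * T m n) * star (H₀ j n)
          + (∑ m : Fin Nt, H₀ i m * T m n) * star (H' j n))) (q b 1) := by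
      refine HasDerivAt.fun_sum fun n _ => ?_
      have hf : HasDerivAt (fun x : ℝ => ∑ m : Fin Nt, nearFieldH lam ρ t
          (Function.update q b (WithLp.toLp 2 (Function.update (q b) 1 x))) i m * T m n)
          (∑ m : Fin Nt, H' i m * T m n) (q b 1) :=
        HasDerivAt.fun_sum fun m _ => (hHent i m).mul_const (T m n)
      have hg : HasDerivAt (fun x : ℝ => star (nearFieldH lam ρ t
          (Function.update q b (WithLp.toLp 2 (Function.update (q b) 1 x))) j n))
          (star (H' j n)) (q b 1) := by
        simpa using ((hHent j n).hasFDerivAt.star).hasDerivAt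
      have hmul := hf.mul hg
      have hv1 : (∑ m : Fin Nt, nearFieldH lam ρ t
          (Function.update q b (WithLp.toLp 2 (Function.update (q b) 1 (q b 1)))) i m * T m n)
          = ∑ m : Fin Nt, H₀ i m * T m n := by rw [hqx0']
      have hv2 : star (nearFieldH lam ρ t
          (Function.update q b (WithLp.toLp 2 (Function.update (q b) 1 (q b 1)))) j n)
          = star (H₀ j n) := by rw [hqx0']
      rw [hv1, hv2] at hmul
      exact hmul
    have hval : A' i j = ∑ n : Fin Nt, ((∑ m : Fin Nt, H' i m * T m n) * star (H₀ j n)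
        + (∑ m : Fin Nt, H₀ i m * T m n) * star (H' j n)) := by
      rw [Finset.sum_add_distrib, hA', Matrix.add_apply]
      have e1 : (H' * T * H₀ᴴ) i j
          = ∑ n : Fin Nt, (∑ m : Fin Nt, H' i m * T m n) * star (H₀ j n) := by
        simp [Matrix.mul_apply, Matrix.conjTranspose_apply, Finset.sum_mul]
      have e2 : (H' * T * H₀ᴴ)ᴴ i j
          = ∑ n : Fin Nt, (∑ m : Fin Nt, H₀ i m * T m n) * star (H' j n) := by
        rw [Matrix.conjTranspose_apply, Matrix.mul_apply]
        simp only [Matrix.mul_apply, Matrix.conjTranspose_apply, star_sum, star_mul',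
          star_star, Finset.sum_mul, Finset.mul_sum]
        rw [Finset.sum_comm]
        refine Finset.sum_congr rfl fun n _ => Finset.sum_congr rfl fun m _ => ?_
        have hTnm : star (T n m) = T m n := by
          have h0 := congrFun (congrFun hT m) n
          simpa [Matrix.conjTranspose_apply] using h0
        rw [hTnm]
        ring
      rw [e1, e2]
    rw [hval]
    exact hsum.add_const _
  -- derivative of the determinant
  have hdet : HasDerivAt (fun x : ℝ => (nearFieldA lam ρ σ T t
      (Function.update q b (WithLp.toLp 2 (Function.update (q b) 1 x)))).det)
      (A₀.det * (A₀⁻¹ * A').trace) (q b 1) := by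
    have h0 := aux_hasDerivAt_det (A := fun x : ℝ => nearFieldA lam ρ σ T t
      (Function.update q b (WithLp.toLp 2 (Function.update (q b) 1 x)))) (A' := A') (x := q b 1) hAent
    simp only [hqx0'] at h0
    rwa [aux_sum_det_updateCol _ _ hdet_unit] at h0
  -- derivative of the real part
  have hre : HasDerivAt (fun x : ℝ => (nearFieldA lam ρ σ T t
      (Function.update q b (WithLp.toLp 2 (Function.update (q b) 1 x)))).det.re)
      ((A₀.det * (A₀⁻¹ * A').trace).re) (q b 1) := by
    have := Complex.reCLM.hasFDerivAt.comp_hasDerivAt (q b 1) hdet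
    exact this
  -- derivative of the log
  have hval0 : (nearFieldA lam ρ σ T t
      (Function.update q b (WithLp.toLp 2 (Function.update (q b) 1 (q b 1))))).det.re = A₀.det.re := by
    rw [hqx0']
  have hne0 : (nearFieldA lam ρ σ T t
      (Function.update q b (WithLp.toLp 2 (Function.update (q b) 1 (q b 1))))).det.re ≠ 0 := by
    rw [hval0]; exact hdet_re.ne'
  have hlog := (Real.hasDerivAt_log hne0).comp (q b 1) hre
  -- trace computation
  have hAinvH : A₀⁻¹ᴴ = A₀⁻¹ := by
    rw [Matrix.conjTranspose_nonsing_inv, hApd.isHermitian.eq]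
  set S : ℂ := ∑ m : Fin Nt, nearFieldC lam ρ σ T t q m b * h' m with hS
  have htr1 : (A₀⁻¹ * (H' * T * H₀ᴴ)).trace = S := by
    rw [Matrix.trace_mul_comm]
    have hassoc : (H' * T * H₀ᴴ) * A₀⁻¹ = H' * (T * H₀ᴴ * A₀⁻¹) := by
      simp [Matrix.mul_assoc]
    rw [hassoc, Matrix.trace_mul_comm, hS]
    have hC : T * H₀ᴴ * A₀⁻¹ = nearFieldC lam ρ σ T t q := by
      rw [nearFieldC, hH₀, hA₀]
    rw [hC, Matrix.trace]
    refine Finset.sum_congr rfl fun m _ => ?_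
    rw [Matrix.diag_apply, Matrix.mul_apply]
    simp [hH', mul_ite, mul_zero]
  have htr2 : (A₀⁻¹ * (H' * T * H₀ᴴ)ᴴ).trace = star S := by
    have h1 : A₀⁻¹ * (H' * T * H₀ᴴ)ᴴ = ((H' * T * H₀ᴴ) * A₀⁻¹)ᴴ := by
      rw [Matrix.conjTranspose_mul (H' * T * H₀ᴴ) A₀⁻¹, hAinvH]
    rw [h1, Matrix.trace_conjTranspose, Matrix.trace_mul_comm, htr1]
  have htr : (A₀⁻¹ * A').trace = S + star S := by
    rw [hA', Matrix.mul_add, Matrix.trace_add, htr1, htr2]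
  -- conclude
  refine HasDerivAt.congr_deriv hlog ?_
  symm
  rw [hval0, htr]
  have hSre : (A₀.det * (S + star S)).re = A₀.det.re * (2 * S.re) := by
    have h1 : (S + star S).re = 2 * S.re := by
      simp [Complex.add_re]
      ring
    have h2 : (S + star S).im = 0 := by
      simp [Complex.add_im]
    rw [Complex.mul_re, h1, h2, hdet_im]
    ring
  rw [hSre]
  field_simp

/-- **Gradient of the rate with respect to the `y`-coordinate of the `b`-th movable antenna.**
If `q_b ≠ t_m` for all `m`, then the partial derivative of `R` with respect to the
`y`-coordinate `y_b` of `q_b` exists and equals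
`(4πρ/λ) · Im( Σ_m [C₂(q)(m,b) − C₁(q)(m,b)] · ((y_b − y_{t,m})/‖t_m − q_b‖) ·
  exp(i(2π/λ)‖t_m − q_b‖) )`. -/
theorem hasDerivAt_rate_y_coordinate {N Nt : ℕ}
    (lam ρ σ : ℝ) (hlam : 0 < lam) (hρ : 0 < ρ) (hσ : 0 < σ ^ 2)
    (t : Fin Nt → EuclideanSpace ℝ (Fin 3))
    (q : Fin N → EuclideanSpace ℝ (Fin 3))
    (T1 T2 : Matrix (Fin Nt) (Fin Nt) ℂ)
    (hT1 : T1.IsHermitian) (hT2 : T2.IsHermitian)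
    (hT1psd : T1.PosSemidef) (hT2psd : T2.PosSemidef)
    (b : Fin N)
    (hq : ∀ m : Fin Nt, q b ≠ t m) :
    HasDerivAt
      (fun x : ℝ =>
        nearFieldR lam ρ σ T1 T2 t (Function.update q b (WithLp.toLp 2 (Function.update (q b) 1 x))))
      ((4 * Real.pi * ρ / lam) *
        (∑ m : Fin Nt,
          (nearFieldC lam ρ σ T2 t q m b - nearFieldC lam ρ σ T1 t q m b) *
            ((((q b 1 - t m 1) / ‖t m - q b‖ : ℝ)) : ℂ) *
            Complex.exp (Complex.I * ((2 * Real.pi / lam * ‖t m - q b‖ : ℝ) : ℂ))).im)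
      (q b 1) := by
  have h1 := aux_logdet_deriv lam ρ σ hσ t q T1 hT1 hT1psd b hq
  have h2 := aux_logdet_deriv lam ρ σ hσ t q T2 hT2 hT2psd b hq
  have h := h1.sub h2
  refine h.congr_deriv ?_
  symm
  simp only [Complex.im_sum, Complex.re_sum]
  simp only [Finset.mul_sum, ← Finset.sum_sub_distrib]
  refine Finset.sum_congr rfl fun m _ => ?_
  have hlam' : lam ≠ 0 := hlam.ne'
  simp only [Complex.mul_im, Complex.mul_re, Complex.sub_re, Complex.sub_im,
    Complex.I_re, Complex.I_im, Complex.ofReal_re, Complex.ofReal_im]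
  field_simp
  ring
end

section
/- Let K ≥ 1, fix k with 1 ≤ k ≤ K, and let H ∈ ℂ^{N×N_t}, W_1,…,W_K and W̄_1,…,W̄_K ∈ ℂ^{N_t×N_k}, v ∈ ℂ^{N_t}, and σ² > 0. Define F = Σ_{u≠k} H W̄_u W̄_u^H H^H + H v v^H H^H + σ² I_N (Hermitian positive definite) and A = (F + H W̄_k W̄_k^H H^H)^{-1} H W̄_k W̄_k^H H^H F^{-1}. Then ln det( I + W_k^H H^H ( Σ_{u≠k} H W_u W_u^H H^H + H v v^H H^H + σ² I_N )^{-1} H W_k ) ≥ ln det( I + W̄_k^H H^H F^{-1} H W̄_k ) − Tr( W̄_k^H H^H F^{-1} H W̄_k ) + 2·Re Tr( W̄_k^H H^H F^{-1} H W_k ) − Re Tr( Σ_{u=1}^{K} W_u^H H^H A H W_u ) − Re Tr( A ( H v v^H H^H + σ² I_N ) ). -/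
open Matrix
open scoped ComplexOrder

section SCAHelpers

variable {n m : Type*} [Fintype n] [Fintype m] [DecidableEq n] [DecidableEq m]

open scoped MatrixOrder

private lemma sca_det_re_pos {M : Matrix n n ℂ} (hM : M.PosDef) : 0 < M.det.re :=
  (Complex.lt_def.mp hM.det_pos).1

private lemma sca_det_im_zero {M : Matrix n n ℂ} (hM : M.PosDef) : M.det.im = 0 :=
  ((Complex.lt_def.mp hM.det_pos).2).symm

private lemma sca_det_real {M : Matrix n n ℂ} (hM : M.PosDef) : M.det = (M.det.re : ℂ) :=
  Complex.ext rfl (by simp [sca_det_im_zero hM])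

private lemma sca_rclike_coe (r : ℝ) : (RCLike.ofReal r : ℂ) = (r : ℂ) := rfl

private lemma sca_trace_eq_sum_eigenvalues {M : Matrix n n ℂ} (hM : M.IsHermitian) :
    M.trace = ∑ i, (hM.eigenvalues i : ℂ) := by
  calc M.trace
      = ((hM.eigenvectorUnitary : Matrix n n ℂ) *
          diagonal (RCLike.ofReal ∘ hM.eigenvalues) *
          (star (hM.eigenvectorUnitary : Matrix n n ℂ))).trace := by
        exact congrArg Matrix.trace hM.spectral_theorem
    _ = ((star (hM.eigenvectorUnitary : Matrix n n ℂ)) *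
          (hM.eigenvectorUnitary : Matrix n n ℂ) *
          diagonal (RCLike.ofReal ∘ hM.eigenvalues)).trace := by
        rw [trace_mul_cycle]
    _ = ∑ i, (hM.eigenvalues i : ℂ) := by
        rw [mem_unitaryGroup_iff'.mp hM.eigenvectorUnitary.2, one_mul, trace_diagonal]
        rfl

private lemma sca_logdet_le {M : Matrix n n ℂ} (hM : M.PosDef) :
    Real.log M.det.re ≤ M.trace.re - Fintype.card n := by
  have hdet : M.det.re = ∏ i, hM.1.eigenvalues i := by
    rw [hM.1.det_eq_prod_eigenvalues]
    simp only [sca_rclike_coe, ← Complex.ofReal_prod, Complex.ofReal_re]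
  have htr : M.trace.re = ∑ i, hM.1.eigenvalues i := by
    rw [sca_trace_eq_sum_eigenvalues hM.1, ← Complex.ofReal_sum, Complex.ofReal_re]
  rw [hdet, htr, Real.log_prod (fun i _ => (hM.eigenvalues_pos i).ne')]
  have h : ∀ i ∈ Finset.univ (α := n), Real.log (hM.1.eigenvalues i) ≤ hM.1.eigenvalues i - 1 :=
    fun i _ => Real.log_le_sub_one_of_pos (hM.eigenvalues_pos i)
  calc ∑ i, Real.log (hM.1.eigenvalues i) ≤ ∑ i, (hM.1.eigenvalues i - 1) :=
        Finset.sum_le_sum h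
    _ = (∑ i, hM.1.eigenvalues i) - Fintype.card n := by
        rw [Finset.sum_sub_distrib]; simp

private lemma sca_one_le_det_one_add {Q : Matrix n n ℂ} (hQ : Q.PosSemidef) :
    1 ≤ (1 + Q).det.re := by
  have hsp := hQ.1.spectral_theorem.trans (Unitary.conjStarAlgAut_apply _ _)
  have hUU : (hQ.1.eigenvectorUnitary : Matrix n n ℂ) *
      star (hQ.1.eigenvectorUnitary : Matrix n n ℂ) = 1 :=
    mem_unitaryGroup_iff.mp hQ.1.eigenvectorUnitary.2
  have h1 : (1 : Matrix n n ℂ) + Q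
      = (hQ.1.eigenvectorUnitary : Matrix n n ℂ) *
        (1 + diagonal (RCLike.ofReal ∘ hQ.1.eigenvalues)) *
        star (hQ.1.eigenvectorUnitary : Matrix n n ℂ) := by
    rw [Matrix.mul_add, Matrix.add_mul, Matrix.mul_one, hUU, ← hsp]
  have hdet : (1 + Q).det
      = ((1 + diagonal (RCLike.ofReal ∘ hQ.1.eigenvalues) : Matrix n n ℂ)).det := by
    rw [h1, det_mul_right_comm, hUU, Matrix.one_mul]
  have h2 : (1 : Matrix n n ℂ) + diagonal (RCLike.ofReal ∘ hQ.1.eigenvalues)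
      = diagonal (fun i => 1 + (hQ.1.eigenvalues i : ℂ)) := by
    rw [← diagonal_one, diagonal_add]; rfl
  rw [hdet, h2, det_diagonal]
  have h3 : (∏ i, (1 + (hQ.1.eigenvalues i : ℂ)))
      = ((∏ i, (1 + hQ.1.eigenvalues i) : ℝ) : ℂ) := by
    push_cast; rfl
  rw [h3, Complex.ofReal_re]
  calc (1:ℝ) = ∏ _i : n, (1:ℝ) := by simp
    _ ≤ ∏ i, (1 + hQ.1.eigenvalues i) :=
        Finset.prod_le_prod (fun i _ => zero_le_one)
          (fun i _ => by linarith [hQ.eigenvalues_nonneg i])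

private lemma sca_det_re_le_add {X P : Matrix n n ℂ} (hX : X.PosDef) (hP : P.PosSemidef) :
    X.det.re ≤ (X + P).det.re := by
  have hXu : IsUnit X.det := hX.det_pos.ne'.isUnit
  set S := CFC.sqrt P with hS
  have hSS : S * S = P := CFC.sqrt_mul_sqrt_self P hP.nonneg
  have hSh : Sᴴ = S := (CFC.sqrt_nonneg P).posSemidef.1
  have hfact : X + P = X * (1 + X⁻¹ * P) := by
    rw [Matrix.mul_add, Matrix.mul_one, Matrix.mul_nonsing_inv_cancel_left _ _ hXu]
  have hQ : (S * X⁻¹ * S).PosSemidef := by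
    have := (hX.inv.posSemidef).conjTranspose_mul_mul_same S
    rwa [hSh] at this
  have hdet2 : (1 + X⁻¹ * P).det = (1 + S * X⁻¹ * S).det := by
    rw [← hSS, ← Matrix.mul_assoc, Matrix.det_one_add_mul_comm, Matrix.mul_assoc,
      ← Matrix.mul_assoc]
  have h1 : 1 ≤ (1 + X⁻¹ * P).det.re := by
    rw [hdet2]; exact sca_one_le_det_one_add hQ
  have h2 : (X + P).det.re = X.det.re * (1 + X⁻¹ * P).det.re := by
    rw [hfact, det_mul, sca_det_real hX, Complex.re_ofReal_mul, Complex.ofReal_re]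
  rw [h2]
  nlinarith [sca_det_re_pos hX]

private lemma sca_posDef_conj {R E : Matrix n n ℂ} (hR : R.IsHermitian) (hRu : IsUnit R.det)
    (hE : E.PosDef) : (R * E * R).PosDef := by
  have h : R * E * R = Rᴴ * E * R := by rw [hR.eq]
  rw [h]
  refine PosDef.of_dotProduct_mulVec_pos (isHermitian_conjTranspose_mul_mul R hE.1) fun x hx => ?_
  have hinj : Function.Injective (R.mulVec) :=
    Matrix.mulVec_injective_iff_isUnit.mpr ((Matrix.isUnit_iff_isUnit_det R).mpr hRu)
  have hRx : R *ᵥ x ≠ 0 := by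
    intro hc
    exact hx (hinj (by simpa using hc))
  simpa only [star_mulVec, dotProduct_mulVec, vecMul_vecMul] using hE.dotProduct_mulVec_pos hRx

private lemma sca_woodbury (J : Matrix n n ℂ) (G : Matrix n m ℂ)
    (hJ : IsUnit J.det) (hB : IsUnit (J + G * Gᴴ).det) :
    (1 + Gᴴ * J⁻¹ * G) * (1 - Gᴴ * (J + G * Gᴴ)⁻¹ * G) = 1 := by
  letI := (Matrix.isUnit_iff_isUnit_det J).mpr hJ |>.invertible
  letI := (Matrix.isUnit_iff_isUnit_det (J + G * Gᴴ)).mpr hB |>.invertible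
  have key : Gᴴ + Gᴴ * J⁻¹ * G * Gᴴ = Gᴴ * J⁻¹ * (J + G * Gᴴ) := by
    simp [Matrix.mul_add, Matrix.mul_assoc, Matrix.inv_mul_cancel_left_of_invertible]
  have h2 : (1 + Gᴴ * J⁻¹ * G) * (Gᴴ * (J + G * Gᴴ)⁻¹ * G) = Gᴴ * J⁻¹ * G := by
    calc (1 + Gᴴ * J⁻¹ * G) * (Gᴴ * (J + G * Gᴴ)⁻¹ * G)
        = (Gᴴ + Gᴴ * J⁻¹ * G * Gᴴ) * ((J + G * Gᴴ)⁻¹ * G) := by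
          simp [Matrix.add_mul, Matrix.mul_assoc]
      _ = Gᴴ * J⁻¹ * ((J + G * Gᴴ) * ((J + G * Gᴴ)⁻¹ * G)) := by
          rw [key]; simp [Matrix.mul_assoc]
      _ = Gᴴ * J⁻¹ * G := by rw [Matrix.mul_inv_cancel_left_of_invertible]
  rw [Matrix.mul_sub, Matrix.mul_one, h2, add_sub_cancel_right]

private lemma sca_complete_square (J : Matrix n n ℂ) (G U : Matrix n m ℂ)
    (hJh : J.IsHermitian) (hB : IsUnit (J + G * Gᴴ).det) :
    (1 - Uᴴ * G) * (1 - Uᴴ * G)ᴴ + Uᴴ * J * U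
      = (1 - Gᴴ * (J + G * Gᴴ)⁻¹ * G)
        + (U - (J + G * Gᴴ)⁻¹ * G)ᴴ * (J + G * Gᴴ) * (U - (J + G * Gᴴ)⁻¹ * G) := by
  set B := J + G * Gᴴ with hBdef
  letI := (Matrix.isUnit_iff_isUnit_det B).mpr hB |>.invertible
  have hBh : B.IsHermitian := by
    rw [hBdef]
    exact hJh.add (isHermitian_mul_conjTranspose_self G)
  have hBih : (B⁻¹)ᴴ = B⁻¹ := by rw [Matrix.conjTranspose_nonsing_inv, hBh.eq]
  simp only [conjTranspose_sub, conjTranspose_mul, conjTranspose_one,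
    conjTranspose_conjTranspose, hBih]
  simp only [Matrix.mul_sub, Matrix.sub_mul, Matrix.mul_add, Matrix.add_mul,
    Matrix.mul_one, Matrix.one_mul, Matrix.mul_assoc,
    Matrix.mul_inv_cancel_left_of_invertible, Matrix.inv_mul_cancel_left_of_invertible]
  simp only [hBdef, Matrix.add_mul, Matrix.mul_add, Matrix.mul_assoc]
  abel

private lemma sca_point_identity (F : Matrix n n ℂ) (Gb : Matrix n m ℂ)
    (hF : IsUnit F.det) (hBf : IsUnit (F + Gb * Gbᴴ).det) :
    (1 + Gbᴴ * F⁻¹ * Gb) * (Gbᴴ * (F + Gb * Gbᴴ)⁻¹) = Gbᴴ * F⁻¹ := by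
  letI := (Matrix.isUnit_iff_isUnit_det F).mpr hF |>.invertible
  letI := (Matrix.isUnit_iff_isUnit_det (F + Gb * Gbᴴ)).mpr hBf |>.invertible
  have key : Gbᴴ + Gbᴴ * F⁻¹ * (Gb * Gbᴴ) = Gbᴴ * F⁻¹ * (F + Gb * Gbᴴ) := by
    simp [Matrix.mul_add, Matrix.mul_assoc, Matrix.inv_mul_cancel_left_of_invertible]
  calc (1 + Gbᴴ * F⁻¹ * Gb) * (Gbᴴ * (F + Gb * Gbᴴ)⁻¹)
      = (Gbᴴ + Gbᴴ * F⁻¹ * (Gb * Gbᴴ)) * (F + Gb * Gbᴴ)⁻¹ := by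
        simp [Matrix.add_mul, Matrix.mul_assoc]
    _ = Gbᴴ * F⁻¹ * ((F + Gb * Gbᴴ) * (F + Gb * Gbᴴ)⁻¹) := by
        rw [key]; simp [Matrix.mul_assoc]
    _ = Gbᴴ * F⁻¹ := by rw [Matrix.mul_inv_of_invertible, Matrix.mul_one]

private lemma sca_vecMulVec_psd (v : n → ℂ) : (vecMulVec v (star v)).PosSemidef := by
  rw [Matrix.vecMulVec_eq (Fin 1), ← Matrix.conjTranspose_replicateCol]
  exact posSemidef_self_mul_conjTranspose _

private lemma sca_hw_psd {p : Type*} [Fintype p] (H : Matrix n m ℂ) (X : Matrix m p ℂ) :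
    (H * X * Xᴴ * Hᴴ).PosSemidef := by
  have h : H * X * Xᴴ * Hᴴ = (H * X) * (H * X)ᴴ := by
    rw [Matrix.conjTranspose_mul, ← Matrix.mul_assoc]
  rw [h]
  exact posSemidef_self_mul_conjTranspose _

private lemma sca_main (J F : Matrix n n ℂ) (G Gb : Matrix n m ℂ)
    (hJpd : J.PosDef) (hFpd : F.PosDef) :
    Real.log ((1 + Gᴴ * J⁻¹ * G).det.re)
      ≥ Real.log ((1 + Gbᴴ * F⁻¹ * Gb).det.re)
        - (Gbᴴ * F⁻¹ * Gb).trace.re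
        + 2 * (Gbᴴ * F⁻¹ * G).trace.re
        - (((F + Gb * Gbᴴ)⁻¹ * (Gb * Gbᴴ) * F⁻¹) * (G * Gᴴ + J)).trace.re := by
  classical
  have hBjpd : (J + G * Gᴴ).PosDef := hJpd.add_posSemidef (posSemidef_self_mul_conjTranspose G)
  have hBfpd : (F + Gb * Gbᴴ).PosDef := hFpd.add_posSemidef (posSemidef_self_mul_conjTranspose Gb)
  have hJu : IsUnit J.det := hJpd.det_pos.ne'.isUnit
  have hFu : IsUnit F.det := hFpd.det_pos.ne'.isUnit
  have hBju : IsUnit (J + G * Gᴴ).det := hBjpd.det_pos.ne'.isUnit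
  have hBfu : IsUnit (F + Gb * Gbᴴ).det := hBfpd.det_pos.ne'.isUnit
  set Sj : Matrix m m ℂ := 1 + Gᴴ * J⁻¹ * G with hSjdef
  set Sb : Matrix m m ℂ := 1 + Gbᴴ * F⁻¹ * Gb with hSbdef
  set Es : Matrix m m ℂ := 1 - Gᴴ * (J + G * Gᴴ)⁻¹ * G with hEsdef
  set Ub : Matrix n m ℂ := (F + Gb * Gbᴴ)⁻¹ * Gb with hUbdef
  set Ee : Matrix m m ℂ := (1 - Ubᴴ * G) * (1 - Ubᴴ * G)ᴴ + Ubᴴ * J * Ub with hEedef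
  set Aa : Matrix n n ℂ := (F + Gb * Gbᴴ)⁻¹ * (Gb * Gbᴴ) * F⁻¹ with hAadef
  have hone : (1 : Matrix m m ℂ).PosDef := by
    rw [← Matrix.diagonal_one]
    exact Matrix.PosDef.diagonal fun _ => zero_lt_one
  have hSjpd : Sj.PosDef :=
    hone.add_posSemidef (hJpd.inv.posSemidef.conjTranspose_mul_mul_same G)
  have hSbpd : Sb.PosDef :=
    hone.add_posSemidef (hFpd.inv.posSemidef.conjTranspose_mul_mul_same Gb)
  have hwood : Sj * Es = 1 := sca_woodbury J G hJu hBju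
  have hEs_inv : Sj⁻¹ = Es := Matrix.inv_eq_right_inv hwood
  have hEspd : Es.PosDef := hEs_inv ▸ hSjpd.inv
  have hdecomp : Ee = Es + (Ub - (J + G * Gᴴ)⁻¹ * G)ᴴ * (J + G * Gᴴ)
      * (Ub - (J + G * Gᴴ)⁻¹ * G) :=
    sca_complete_square J G Ub hJpd.1 hBju
  have hCpsd : ((Ub - (J + G * Gᴴ)⁻¹ * G)ᴴ * (J + G * Gᴴ)
      * (Ub - (J + G * Gᴴ)⁻¹ * G)).PosSemidef :=
    hBjpd.posSemidef.conjTranspose_mul_mul_same _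
  have hEepd : Ee.PosDef := by rw [hdecomp]; exact hEspd.add_posSemidef hCpsd
  have hBfih : ((F + Gb * Gbᴴ)⁻¹)ᴴ = (F + Gb * Gbᴴ)⁻¹ := by
    rw [Matrix.conjTranspose_nonsing_inv, hBfpd.1.eq]
  have hUbH : Ubᴴ = Gbᴴ * (F + Gb * Gbᴴ)⁻¹ := by
    rw [hUbdef, Matrix.conjTranspose_mul, hBfih]
  have hSbUb : Sb * Ubᴴ = Gbᴴ * F⁻¹ := by
    rw [hUbH, ← Matrix.mul_assoc]
    have := sca_point_identity F Gb hFu hBfu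
    rw [← hSbdef] at this
    calc Sb * Gbᴴ * (F + Gb * Gbᴴ)⁻¹ = Sb * (Gbᴴ * (F + Gb * Gbᴴ)⁻¹) := by
          rw [Matrix.mul_assoc]
      _ = Gbᴴ * F⁻¹ := this
  have hAeq : Ub * (Sb * Ubᴴ) = Aa := by
    rw [hSbUb, hUbdef, hAadef]
    simp only [Matrix.mul_assoc]
  have htr : (Sb * Ee).trace
      = (Fintype.card m : ℂ) + (Gbᴴ * F⁻¹ * Gb).trace
        - (Gbᴴ * F⁻¹ * G).trace - star ((Gbᴴ * F⁻¹ * G).trace)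
        + (Aa * (G * Gᴴ + J)).trace := by
    have hEexp : Ee = 1 - Ubᴴ * G - (Ubᴴ * G)ᴴ + Ubᴴ * ((G * Gᴴ + J) * Ub) := by
      rw [hEedef]
      simp only [conjTranspose_sub, conjTranspose_mul, conjTranspose_one,
        conjTranspose_conjTranspose, Matrix.mul_sub, Matrix.sub_mul, Matrix.mul_add,
        Matrix.add_mul, Matrix.mul_one, Matrix.one_mul, Matrix.mul_assoc]
      abel
    have ht1 : (Sb * (Ubᴴ * G)).trace = (Gbᴴ * F⁻¹ * G).trace := by
      rw [← Matrix.mul_assoc, hSbUb]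
    have ht2 : (Sb * (Ubᴴ * G)ᴴ).trace = star ((Gbᴴ * F⁻¹ * G).trace) := by
      have h : (Sb * (Ubᴴ * G)ᴴ)ᴴ = (Ubᴴ * G) * Sb := by
        rw [Matrix.conjTranspose_mul, conjTranspose_conjTranspose, hSbpd.1.eq]
      calc (Sb * (Ubᴴ * G)ᴴ).trace = star ((Sb * (Ubᴴ * G)ᴴ)ᴴ.trace) := by
            rw [Matrix.trace_conjTranspose, star_star]
        _ = star (((Ubᴴ * G) * Sb).trace) := by rw [h]
        _ = star ((Sb * (Ubᴴ * G)).trace) := by rw [Matrix.trace_mul_comm]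
        _ = star ((Gbᴴ * F⁻¹ * G).trace) := by rw [ht1]
    have ht3 : (Sb * (Ubᴴ * ((G * Gᴴ + J) * Ub))).trace = (Aa * (G * Gᴴ + J)).trace := by
      calc (Sb * (Ubᴴ * ((G * Gᴴ + J) * Ub))).trace
          = ((Sb * Ubᴴ * (G * Gᴴ + J)) * Ub).trace := by simp only [Matrix.mul_assoc]
        _ = (Ub * (Sb * Ubᴴ * (G * Gᴴ + J))).trace := by rw [Matrix.trace_mul_comm]
        _ = ((Ub * (Sb * Ubᴴ)) * (G * Gᴴ + J)).trace := by simp only [Matrix.mul_assoc]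
        _ = (Aa * (G * Gᴴ + J)).trace := by rw [hAeq]
    rw [hEexp]
    simp only [Matrix.mul_sub, Matrix.mul_add, Matrix.mul_one, Matrix.trace_sub,
      Matrix.trace_add, ht1, ht2, ht3]
    rw [hSbdef, Matrix.trace_add, Matrix.trace_one]
  set a := Sj.det.re with ha
  set b := Es.det.re with hb
  set c := Ee.det.re with hc
  set d := Sb.det.re with hd
  have hapos : 0 < a := sca_det_re_pos hSjpd
  have hbpos : 0 < b := sca_det_re_pos hEspd
  have hcpos : 0 < c := sca_det_re_pos hEepd
  have hdpos : 0 < d := sca_det_re_pos hSbpd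
  have hab : a * b = 1 := by
    have h1 : Sj.det * Es.det = 1 := by rw [← det_mul, hwood, det_one]
    rw [sca_det_real hSjpd, sca_det_real hEspd, ← Complex.ofReal_mul] at h1
    exact_mod_cast h1
  have hbc : b ≤ c := by
    rw [hb, hc, hdecomp]
    exact sca_det_re_le_add hEspd hCpsd
  have hRmain : Real.log (d * c) ≤ (Sb * Ee).trace.re - Fintype.card m := by
    set R := CFC.sqrt Sb with hR
    have hRR : R * R = Sb := CFC.sqrt_mul_sqrt_self Sb hSbpd.posSemidef.nonneg
    have hRh : R.IsHermitian := (CFC.sqrt_nonneg Sb).posSemidef.1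
    have hRu : IsUnit R.det := by
      have h0 : R.det * R.det = Sb.det := by rw [← det_mul, hRR]
      have h2 : IsUnit (R.det * R.det) := h0 ▸ hSbpd.det_pos.ne'.isUnit
      exact isUnit_of_mul_isUnit_left h2
    have hMpd : (R * Ee * R).PosDef := sca_posDef_conj hRh hRu hEepd
    have hMdet : (R * Ee * R).det = Sb.det * Ee.det := by
      calc (R * Ee * R).det = R.det * Ee.det * R.det := by rw [det_mul, det_mul]
        _ = (R * R).det * Ee.det := by rw [det_mul]; ring
        _ = Sb.det * Ee.det := by rw [hRR]
    have hMdetre : (R * Ee * R).det.re = d * c := by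
      rw [hMdet, sca_det_real hSbpd, Complex.re_ofReal_mul, hd, hc]
    have hMtr : (R * Ee * R).trace = (Sb * Ee).trace := by
      rw [Matrix.trace_mul_cycle, hRR, Matrix.trace_mul_comm]
    have := sca_logdet_le hMpd
    rwa [hMdetre, hMtr] at this
  have htrre : (Sb * Ee).trace.re
      = (Fintype.card m : ℝ) + (Gbᴴ * F⁻¹ * Gb).trace.re
        - 2 * (Gbᴴ * F⁻¹ * G).trace.re + (Aa * (G * Gᴴ + J)).trace.re := by
    rw [htr]
    simp only [Complex.add_re, Complex.sub_re, Complex.natCast_re, Complex.conj_re,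
      RCLike.star_def]
    ring
  have hlog1 : Real.log a = - Real.log b := by
    have h0 : a = b⁻¹ := by field_simp at hab ⊢; linarith [hab]
    rw [h0, Real.log_inv]
  have hlog2 : Real.log b ≤ Real.log c := Real.log_le_log hbpos hbc
  have hlog3 : Real.log d + Real.log c ≤ (Sb * Ee).trace.re - Fintype.card m := by
    rw [← Real.log_mul hdpos.ne' hcpos.ne']
    exact hRmain
  rw [htrre] at hlog3
  rw [ge_iff_le, hlog1]
  linarith

end SCAHelpers

/-- **Concave lower bound (SCA surrogate) on the achievable rate of user `k`.**
With `H ∈ ℂ^{N×Nt}`, precoders `W u, W̄ u ∈ ℂ^{Nt×Nk}` for `u = 1, …, K`, sensing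
beamformer `v ∈ ℂ^{Nt}` and noise variance `σ² > 0`, setting
`F = Σ_{u≠k} H W̄_u W̄_uᴴ Hᴴ + H v vᴴ Hᴴ + σ² I` and
`A = (F + H W̄_k W̄_kᴴ Hᴴ)⁻¹ H W̄_k W̄_kᴴ Hᴴ F⁻¹`, the achievable rate `R_k` of user `k`
is lower bounded by the surrogate `R̂_k` obtained by expanding around `W̄_1, …, W̄_K`. -/
theorem rate_sca_lower_bound {N Nt Nk K : ℕ} (hK : 1 ≤ K) (k : Fin K)
    (H : Matrix (Fin N) (Fin Nt) ℂ)
    (W Wb : Fin K → Matrix (Fin Nt) (Fin Nk) ℂ)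
    (v : Fin Nt → ℂ) (σ : ℝ) (hσ : 0 < σ ^ 2) :
    let F : Matrix (Fin N) (Fin N) ℂ :=
      (∑ u ∈ Finset.univ.erase k, H * Wb u * (Wb u)ᴴ * Hᴴ)
        + H * Matrix.vecMulVec v (star v) * Hᴴ + ((σ ^ 2 : ℝ) : ℂ) • 1
    let A : Matrix (Fin N) (Fin N) ℂ :=
      (F + H * Wb k * (Wb k)ᴴ * Hᴴ)⁻¹ * (H * Wb k * (Wb k)ᴴ * Hᴴ) * F⁻¹
    Real.log ((1 + (W k)ᴴ * Hᴴ *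
        ((∑ u ∈ Finset.univ.erase k, H * W u * (W u)ᴴ * Hᴴ)
          + H * Matrix.vecMulVec v (star v) * Hᴴ + ((σ ^ 2 : ℝ) : ℂ) • 1)⁻¹
        * H * W k).det.re) ≥
      Real.log ((1 + (Wb k)ᴴ * Hᴴ * F⁻¹ * H * Wb k).det.re)
        - (((Wb k)ᴴ * Hᴴ * F⁻¹ * H * Wb k).trace).re
        + 2 * (((Wb k)ᴴ * Hᴴ * F⁻¹ * H * W k).trace).re
        - ((∑ u, (W u)ᴴ * Hᴴ * A * H * W u).trace).re
        - ((A * (H * Matrix.vecMulVec v (star v) * Hᴴ + ((σ ^ 2 : ℝ) : ℂ) • 1)).trace).re := by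
  intro F A
  have hAdef : A = (F + H * Wb k * (Wb k)ᴴ * Hᴴ)⁻¹ * (H * Wb k * (Wb k)ᴴ * Hᴴ) * F⁻¹ := rfl
  have hFdef : F = (∑ u ∈ Finset.univ.erase k, H * Wb u * (Wb u)ᴴ * Hᴴ)
      + H * Matrix.vecMulVec v (star v) * Hᴴ + ((σ ^ 2 : ℝ) : ℂ) • 1 := rfl
  -- notation
  set S : Matrix (Fin N) (Fin N) ℂ :=
    H * Matrix.vecMulVec v (star v) * Hᴴ + ((σ ^ 2 : ℝ) : ℂ) • 1 with hSdef
  -- positive definiteness of the interference-plus-noise matrices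
  have hsigma : (((σ ^ 2 : ℝ) : ℂ) • (1 : Matrix (Fin N) (Fin N) ℂ)).PosDef := by
    rw [Matrix.smul_one_eq_diagonal]
    exact Matrix.PosDef.diagonal fun _ => Complex.zero_lt_real.mpr hσ
  have hSpd : S.PosDef :=
    Matrix.PosDef.posSemidef_add ((sca_vecMulVec_psd v).mul_mul_conjTranspose_same H) hsigma
  have sumPSD : ∀ (P : Fin K → Matrix (Fin Nt) (Fin Nk) ℂ),
      (∑ u ∈ Finset.univ.erase k, H * P u * (P u)ᴴ * Hᴴ).PosSemidef := fun P =>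
    Finset.sum_induction _ Matrix.PosSemidef (fun _ _ ha hb => ha.add hb)
      Matrix.PosSemidef.zero (fun u _ => sca_hw_psd H (P u))
  have hJpd : ((∑ u ∈ Finset.univ.erase k, H * W u * (W u)ᴴ * Hᴴ)
      + H * Matrix.vecMulVec v (star v) * Hᴴ + ((σ ^ 2 : ℝ) : ℂ) • 1).PosDef := by
    rw [add_assoc, ← hSdef]
    exact Matrix.PosDef.posSemidef_add (sumPSD W) hSpd
  have hFpd : F.PosDef := by
    rw [hFdef, add_assoc, ← hSdef]
    exact Matrix.PosDef.posSemidef_add (sumPSD Wb) hSpd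
  -- main abstract inequality
  have key := sca_main
    ((∑ u ∈ Finset.univ.erase k, H * W u * (W u)ᴴ * Hᴴ)
      + H * Matrix.vecMulVec v (star v) * Hᴴ + ((σ ^ 2 : ℝ) : ℂ) • 1)
    F (H * W k) (H * Wb k) hJpd hFpd
  -- expression matching
  have e1 : (1 : Matrix (Fin Nk) (Fin Nk) ℂ) + (H * W k)ᴴ *
      ((∑ u ∈ Finset.univ.erase k, H * W u * (W u)ᴴ * Hᴴ)
        + H * Matrix.vecMulVec v (star v) * Hᴴ + ((σ ^ 2 : ℝ) : ℂ) • 1)⁻¹ * (H * W k)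
      = 1 + (W k)ᴴ * Hᴴ *
        ((∑ u ∈ Finset.univ.erase k, H * W u * (W u)ᴴ * Hᴴ)
          + H * Matrix.vecMulVec v (star v) * Hᴴ + ((σ ^ 2 : ℝ) : ℂ) • 1)⁻¹ * H * W k := by
    simp only [Matrix.conjTranspose_mul, Matrix.mul_assoc]
  have e2 : (1 : Matrix (Fin Nk) (Fin Nk) ℂ) + (H * Wb k)ᴴ * F⁻¹ * (H * Wb k)
      = 1 + (Wb k)ᴴ * Hᴴ * F⁻¹ * H * Wb k := by
    simp only [Matrix.conjTranspose_mul, Matrix.mul_assoc]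
  have e3 : (H * Wb k)ᴴ * F⁻¹ * (H * Wb k) = (Wb k)ᴴ * Hᴴ * F⁻¹ * H * Wb k := by
    simp only [Matrix.conjTranspose_mul, Matrix.mul_assoc]
  have e4 : (H * Wb k)ᴴ * F⁻¹ * (H * W k) = (Wb k)ᴴ * Hᴴ * F⁻¹ * H * W k := by
    simp only [Matrix.conjTranspose_mul, Matrix.mul_assoc]
  -- splitting the last trace
  have hGbGb : H * Wb k * (Wb k)ᴴ * Hᴴ = (H * Wb k) * (H * Wb k)ᴴ := by
    simp only [Matrix.conjTranspose_mul, Matrix.mul_assoc]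
  have hGG : H * W k * (W k)ᴴ * Hᴴ = (H * W k) * (H * W k)ᴴ := by
    simp only [Matrix.conjTranspose_mul, Matrix.mul_assoc]
  have hAeq2 : A = (F + (H * Wb k) * (H * Wb k)ᴴ)⁻¹ * ((H * Wb k) * (H * Wb k)ᴴ) * F⁻¹ := by
    rw [hAdef, hGbGb]
  have hJJ : (H * W k) * (H * W k)ᴴ
      + ((∑ u ∈ Finset.univ.erase k, H * W u * (W u)ᴴ * Hᴴ)
        + H * Matrix.vecMulVec v (star v) * Hᴴ + ((σ ^ 2 : ℝ) : ℂ) • 1)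
      = (∑ u, H * W u * (W u)ᴴ * Hᴴ) + S := by
    rw [← hGG, add_assoc, ← hSdef,
      ← Finset.sum_erase_add Finset.univ (fun u => H * W u * (W u)ᴴ * Hᴴ) (Finset.mem_univ k)]
    abel
  have hsplit : ((F + (H * Wb k) * (H * Wb k)ᴴ)⁻¹ * ((H * Wb k) * (H * Wb k)ᴴ) * F⁻¹ *
        ((H * W k) * (H * W k)ᴴ
          + ((∑ u ∈ Finset.univ.erase k, H * W u * (W u)ᴴ * Hᴴ)
            + H * Matrix.vecMulVec v (star v) * Hᴴ + ((σ ^ 2 : ℝ) : ℂ) • 1))).trace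
      = (∑ u, (W u)ᴴ * Hᴴ * A * H * W u).trace + (A * S).trace := by
    rw [← hAeq2, hJJ, Matrix.mul_add, Matrix.trace_add, Matrix.mul_sum, Matrix.trace_sum,
      Matrix.trace_sum]
    congr 1
    refine Finset.sum_congr rfl fun u _ => ?_
    have h1 : A * (H * W u * (W u)ᴴ * Hᴴ) = (A * H * W u) * ((W u)ᴴ * Hᴴ) := by
      simp only [Matrix.mul_assoc]
    rw [h1, Matrix.trace_mul_comm]
    simp only [Matrix.mul_assoc]
  rw [e1, e2, e3, e4, hsplit, Complex.add_re] at key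
  linarith
end
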